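/- Let s be an s-number. Then the sequence of right convergents (R_n(s))_{n≥0} is strictly decreasing and bounded from below: R_{n+1}(s) < R_n(s) for all n ∈ ℕ, and R_n(s) > L_0(s) for all n ∈ ℕ, where L_0(s) = (a_{0,s}+b_{0,s})/(c_{0,s}+d_{0,s}). -/
import Mathlib

/-- The 2×2 integer matrix V(m) = ((m, -1), (1, 0)). -/
def V (m : ℤ) : Matrix (Fin 2) (Fin 2) ℤ := !![m, -1; 1, 0]

/-- The matrix g_{n,s} = V(s 0) · V(s 1) ··· V(s n). -/
def gMat (s : ℕ → ℤ) (n : ℕ) : Matrix (Fin 2) (Fin 2) ℤ :=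
  ((List.range (n + 1)).map fun i => V (s i)).prod

/-- The n-th right convergent R_n(s) = a_{n,s} / c_{n,s} as a real number. -/
noncomputable def R (s : ℕ → ℤ) (n : ℕ) : ℝ :=
  (gMat s n 0 0 : ℝ) / (gMat s n 1 0 : ℝ)

/-- The n-th left convergent L_n(s) = (a_{n,s}+b_{n,s})/(c_{n,s}+d_{n,s}) as a real number. -/
noncomputable def L (s : ℕ → ℤ) (n : ℕ) : ℝ :=
  ((gMat s n 0 0 : ℝ) + (gMat s n 0 1 : ℝ)) / ((gMat s n 1 0 : ℝ) + (gMat s n 1 1 : ℝ))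

lemma gMat_zero (s : ℕ → ℤ) : gMat s 0 = V (s 0) := by
  simp [gMat, List.range_succ, mul_assoc]

lemma gMat_succ (s : ℕ → ℤ) (n : ℕ) :
    gMat s (n + 1) = gMat s n * V (s (n + 1)) := by
  simp [gMat, List.range_succ, mul_assoc]

lemma mulV (g : Matrix (Fin 2) (Fin 2) ℤ) (m : ℤ) :
    g * V m = !![g 0 0 * m + g 0 1, -(g 0 0); g 1 0 * m + g 1 1, -(g 1 0)] := by
  ext i j
  fin_cases i <;> fin_cases j <;>
    simp [V, Matrix.mul_apply, Fin.sum_univ_two] <;> ring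

lemma a_succ (s : ℕ → ℤ) (n : ℕ) :
    gMat s (n + 1) 0 0 = gMat s n 0 0 * s (n + 1) + gMat s n 0 1 := by
  rw [gMat_succ, mulV]; simp

lemma b_succ (s : ℕ → ℤ) (n : ℕ) :
    gMat s (n + 1) 0 1 = -(gMat s n 0 0) := by
  rw [gMat_succ, mulV]; simp

lemma c_succ (s : ℕ → ℤ) (n : ℕ) :
    gMat s (n + 1) 1 0 = gMat s n 1 0 * s (n + 1) + gMat s n 1 1 := by
  rw [gMat_succ, mulV]; simp

lemma d_succ (s : ℕ → ℤ) (n : ℕ) :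
    gMat s (n + 1) 1 1 = -(gMat s n 1 0) := by
  rw [gMat_succ, mulV]; simp

lemma gMat_det (s : ℕ → ℤ) (n : ℕ) :
    gMat s n 0 0 * gMat s n 1 1 - gMat s n 0 1 * gMat s n 1 0 = 1 := by
  have h : (gMat s n).det = 1 := by
    induction n with
    | zero => rw [gMat_zero]; simp [V, Matrix.det_fin_two_of]
    | succ n ih => rw [gMat_succ, Matrix.det_mul, ih]; simp [V, Matrix.det_fin_two_of]
  rw [Matrix.det_fin_two] at h
  linarith

lemma gMat_pos (s : ℕ → ℤ) (hs : ∀ n : ℕ, 1 ≤ n → 2 ≤ s n) (n : ℕ) :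
    1 ≤ gMat s n 1 0 ∧ 1 ≤ gMat s n 1 0 + gMat s n 1 1 := by
  induction n with
  | zero => rw [gMat_zero]; norm_num [V]
  | succ n ih =>
    obtain ⟨hc, hcd⟩ := ih
    have hm : 2 ≤ s (n + 1) := hs (n + 1) (by omega)
    rw [c_succ, d_succ]
    constructor <;> nlinarith

/-- For an s-number s, the sequence of right convergents is strictly
decreasing and bounded from below by L_0(s). -/
theorem stmt_6 (s : ℕ → ℤ) (hs : ∀ n : ℕ, 1 ≤ n → 2 ≤ s n) :
    (∀ n : ℕ, R s (n + 1) < R s n) ∧ (∀ n : ℕ, L s 0 < R s n) := by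
  have hcpos : ∀ n : ℕ, (0 : ℝ) < (gMat s n 1 0 : ℝ) := by
    intro n
    have h := (gMat_pos s hs n).1
    have : (0:ℤ) < gMat s n 1 0 := by linarith
    exact_mod_cast this
  have hcdpos : ∀ n : ℕ, (0 : ℝ) < (gMat s n 1 0 : ℝ) + (gMat s n 1 1 : ℝ) := by
    intro n
    have h := (gMat_pos s hs n).2
    have : (0:ℤ) < gMat s n 1 0 + gMat s n 1 1 := by linarith
    exact_mod_cast this
  have hLR : ∀ n : ℕ, L s n < R s n := by
    intro n
    rw [L, R, div_lt_div_iff₀ (hcdpos n) (hcpos n)]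
    have det := gMat_det s n
    have : (gMat s n 0 0 + gMat s n 0 1) * gMat s n 1 0
        < gMat s n 0 0 * (gMat s n 1 0 + gMat s n 1 1) := by nlinarith
    exact_mod_cast this
  have hLmono : ∀ n : ℕ, L s n ≤ L s (n + 1) := by
    intro n
    have hm : 2 ≤ s (n + 1) := hs (n + 1) (by omega)
    rw [L, L, div_le_div_iff₀ (hcdpos n) (hcdpos (n + 1))]
    have det := gMat_det s n
    have key : (gMat s n 0 0 + gMat s n 0 1) * (gMat s (n+1) 1 0 + gMat s (n+1) 1 1)
        ≤ (gMat s (n+1) 0 0 + gMat s (n+1) 0 1) * (gMat s n 1 0 + gMat s n 1 1) := by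
      rw [a_succ, b_succ, c_succ, d_succ]
      nlinarith
    exact_mod_cast key
  have hL0 : ∀ n : ℕ, L s 0 ≤ L s n := by
    intro n
    induction n with
    | zero => exact le_refl _
    | succ n ih => exact ih.trans (hLmono n)
  constructor
  · intro n
    rw [R, R, div_lt_div_iff₀ (hcpos (n + 1)) (hcpos n)]
    have det := gMat_det s n
    have key : gMat s (n+1) 0 0 * gMat s n 1 0 < gMat s n 0 0 * gMat s (n+1) 1 0 := by
      rw [a_succ, c_succ]; nlinarith
    exact_mod_cast key
  · intro n
    exact (hL0 n).trans_lt (hLR n)
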